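/- Let n ≥ 1 and p ≥ 1 be natural numbers, and let μ be the uniform (rotation-invariant) probability measure on the unit sphere in EuclideanSpace ℝ (Fin (4n)). Then the p-th moment of the first edgelength of a random spatial arm of length 2 satisfies ∫ (2·(x₀² + x₁² + x₂² + x₃²))^p dμ(x) = 2^p · B(p, 2n) / B(p, 2), where x₀, x₁, x₂, x₃ are the first four coordinates of x and B is the Euler Beta function B(a,b) = Γ(a)Γ(b)/Γ(a+b). -/

import Mathlib

open MeasureTheory Real

/-- The Euler Beta function `B(a,b) = Γ(a)Γ(b)/Γ(a+b)`. -/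
noncomputable def eulerBeta (a b : ℝ) : ℝ := Real.Gamma a * Real.Gamma b / Real.Gamma (a + b)

noncomputable section
variable {m : ℕ}

def rotFun (i j : Fin m) (θ : ℝ) (x : EuclideanSpace ℝ (Fin m)) : EuclideanSpace ℝ (Fin m) :=
  WithLp.toLp 2 fun l => if l = i then Real.cos θ * x i - Real.sin θ * x j
    else if l = j then Real.sin θ * x i + Real.cos θ * x j else x l

lemma rotFun_apply_i (i j : Fin m) (θ : ℝ) (x : EuclideanSpace ℝ (Fin m)) :
    rotFun i j θ x i = Real.cos θ * x i - Real.sin θ * x j := by simp [rotFun]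

lemma rotFun_apply_j (i j : Fin m) (hij : i ≠ j) (θ : ℝ) (x : EuclideanSpace ℝ (Fin m)) :
    rotFun i j θ x j = Real.sin θ * x i + Real.cos θ * x j := by
  simp [rotFun, hij.symm]

lemma rotFun_apply_ne {i j l : Fin m} (h1 : l ≠ i) (h2 : l ≠ j) (θ : ℝ)
    (x : EuclideanSpace ℝ (Fin m)) : rotFun i j θ x l = x l := by simp [rotFun, h1, h2]

lemma sum_split (i j : Fin m) (hij : i ≠ j) (f : Fin m → ℝ) :
    ∑ l, f l = f i + f j + ∑ l ∈ (Finset.univ.erase i).erase j, f l := by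
  rw [← Finset.add_sum_erase _ f (Finset.mem_univ i),
    ← Finset.add_sum_erase _ f (Finset.mem_erase.mpr ⟨hij.symm, Finset.mem_univ j⟩)]
  ring

lemma rotFun_invol (i j : Fin m) (hij : i ≠ j) (θ : ℝ) (x : EuclideanSpace ℝ (Fin m)) :
    rotFun i j (-θ) (rotFun i j θ x) = x := by
  ext l
  by_cases h1 : l = i
  · rw [h1, rotFun_apply_i, rotFun_apply_i, rotFun_apply_j i j hij, Real.cos_neg, Real.sin_neg]
    linear_combination (x i) * (Real.sin_sq_add_cos_sq θ)
  · by_cases h2 : l = j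
    · rw [h2, rotFun_apply_j i j hij, rotFun_apply_i, rotFun_apply_j i j hij,
        Real.cos_neg, Real.sin_neg]
      linear_combination (x j) * (Real.sin_sq_add_cos_sq θ)
    · rw [rotFun_apply_ne h1 h2, rotFun_apply_ne h1 h2]

def rot (i j : Fin m) (hij : i ≠ j) (θ : ℝ) :
    EuclideanSpace ℝ (Fin m) ≃ₗᵢ[ℝ] EuclideanSpace ℝ (Fin m) :=
  LinearEquiv.isometryOfInner
    { toFun := rotFun i j θ
      invFun := rotFun i j (-θ)
      map_add' := by
        intro x y; ext l
        simp only [rotFun, PiLp.add_apply, PiLp.toLp_apply]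
        split_ifs <;> ring
      map_smul' := by
        intro c x; ext l
        simp only [rotFun, PiLp.smul_apply, PiLp.toLp_apply, smul_eq_mul, RingHom.id_apply]
        split_ifs <;> ring
      left_inv := by intro x; exact rotFun_invol i j hij θ x
      right_inv := by
        intro x
        have := rotFun_invol i j hij (-θ) x
        rwa [neg_neg] at this }
    (by
      intro y x
      simp only [LinearEquiv.coe_mk, LinearMap.coe_mk, AddHom.coe_mk, PiLp.inner_apply, RCLike.inner_apply, conj_trivial]
      rw [sum_split i j hij (fun l => rotFun i j θ x l * rotFun i j θ y l),
        sum_split i j hij (fun l => x l * y l)]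
      have hrest : ∑ l ∈ (Finset.univ.erase i).erase j,
          rotFun i j θ x l * rotFun i j θ y l = ∑ l ∈ (Finset.univ.erase i).erase j, x l * y l := by
        refine Finset.sum_congr rfl fun l hl => ?_
        obtain ⟨h2, h1, -⟩ := Finset.mem_erase.mp hl |>.imp id Finset.mem_erase.mp
        rw [rotFun_apply_ne h1 h2, rotFun_apply_ne h1 h2]
      rw [hrest, rotFun_apply_i, rotFun_apply_i, rotFun_apply_j i j hij, rotFun_apply_j i j hij]
      linear_combination (x i * y i + x j * y j) * (Real.sin_sq_add_cos_sq θ))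

lemma rot_apply (i j : Fin m) (hij : i ≠ j) (θ : ℝ) (x : EuclideanSpace ℝ (Fin m)) (l : Fin m) :
    rot i j hij θ x l = rotFun i j θ x l := rfl

lemma rot_continuous (i j : Fin m) (hij : i ≠ j) (θ : ℝ) : Continuous (rot i j hij θ) :=
  (rot i j hij θ).continuous
section
variable {m : ℕ} (μ : Measure (EuclideanSpace ℝ (Fin m))) [IsProbabilityMeasure μ]

lemma ae_sphere (hsphere : μ (Metric.sphere (0 : EuclideanSpace ℝ (Fin m)) 1) = 1) :
    ∀ᵐ x ∂μ, ‖x‖ = 1 := by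
  have hms : MeasurableSet (Metric.sphere (0 : EuclideanSpace ℝ (Fin m)) 1) :=
    (Metric.isClosed_sphere).measurableSet
  have : μ (Metric.sphere (0 : EuclideanSpace ℝ (Fin m)) 1)ᶜ = 0 := by
    rw [measure_compl hms (measure_ne_top μ _), hsphere, measure_univ, tsub_self]
  filter_upwards [MeasureTheory.ae_iff.mpr (by exact this)] with x hx
  simpa [Metric.mem_sphere, dist_zero_right] using hx

lemma ae_sum_sq (hsphere : μ (Metric.sphere (0 : EuclideanSpace ℝ (Fin m)) 1) = 1) :
    ∀ᵐ x ∂μ, ∑ i, x i ^ 2 = 1 := by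
  filter_upwards [ae_sphere μ hsphere] with x hx
  have := EuclideanSpace.norm_eq x
  rw [hx] at this
  have h2 : ∑ i, x i ^ 2 = ∑ i, ‖x i‖ ^ 2 := by simp [sq_abs]
  nlinarith [Real.sq_sqrt (by positivity : (0:ℝ) ≤ ∑ i, ‖x i‖^2)]

lemma cont_integrable (hsphere : μ (Metric.sphere (0 : EuclideanSpace ℝ (Fin m)) 1) = 1)
    (f : EuclideanSpace ℝ (Fin m) → ℝ) (hf : Continuous f) : Integrable f μ := by
  obtain ⟨C, hC⟩ := (isCompact_sphere (0 : EuclideanSpace ℝ (Fin m)) 1).exists_bound_of_continuousOn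
    hf.continuousOn
  refine (integrable_const C).mono' hf.aestronglyMeasurable ?_
  filter_upwards [ae_sphere μ hsphere] with x hx
  exact hC x (by simpa [Metric.mem_sphere, dist_zero_right] using hx)

lemma integral_comp_rot
    (hinv : ∀ O : EuclideanSpace ℝ (Fin m) ≃ₗᵢ[ℝ] EuclideanSpace ℝ (Fin m),
      Measure.map (fun x => O x) μ = μ)
    (O : EuclideanSpace ℝ (Fin m) ≃ₗᵢ[ℝ] EuclideanSpace ℝ (Fin m))
    (f : EuclideanSpace ℝ (Fin m) → ℝ) (hf : Continuous f) :
    ∫ x, f (O x) ∂μ = ∫ x, f x ∂μ := by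
  conv_rhs => rw [← hinv O]
  rw [integral_map O.continuous.measurable.aemeasurable hf.aestronglyMeasurable]


variable {m : ℕ}

/-- The sum of squares of the first four coordinates. -/
def TT (hm : 4 ≤ m) (x : EuclideanSpace ℝ (Fin m)) : ℝ :=
  x ⟨0, by omega⟩ ^ 2 + x ⟨1, by omega⟩ ^ 2 + x ⟨2, by omega⟩ ^ 2 + x ⟨3, by omega⟩ ^ 2

lemma TT_continuous (hm : 4 ≤ m) : Continuous (TT hm) := by
  unfold TT
  fun_prop

lemma TT_rot_outside (hm : 4 ≤ m) (j j' : Fin m) (hjj' : j ≠ j') (hj : 4 ≤ j.val)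
    (hj' : 4 ≤ j'.val) (θ : ℝ) (x : EuclideanSpace ℝ (Fin m)) :
    TT hm (rot j j' hjj' θ x) = TT hm x := by
  unfold TT
  rw [rot_apply, rot_apply, rot_apply, rot_apply]
  rw [rotFun_apply_ne (Fin.ne_of_val_ne (by simp; omega)) (Fin.ne_of_val_ne (by simp; omega)),
    rotFun_apply_ne (Fin.ne_of_val_ne (by simp; omega)) (Fin.ne_of_val_ne (by simp; omega)),
    rotFun_apply_ne (Fin.ne_of_val_ne (by simp; omega)) (Fin.ne_of_val_ne (by simp; omega)),
    rotFun_apply_ne (Fin.ne_of_val_ne (by simp; omega)) (Fin.ne_of_val_ne (by simp; omega))]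

section
variable (μ : Measure (EuclideanSpace ℝ (Fin m))) [IsProbabilityMeasure μ]

lemma sym1 (hinv : ∀ O : EuclideanSpace ℝ (Fin m) ≃ₗᵢ[ℝ] EuclideanSpace ℝ (Fin m),
      Measure.map (fun x => O x) μ = μ)
    (hm : 4 ≤ m) (k : ℕ) (a : Fin m)
    (ha : a = (⟨1, by omega⟩ : Fin m) ∨ a = (⟨2, by omega⟩ : Fin m) ∨ a = (⟨3, by omega⟩ : Fin m)) :
    ∫ x, TT hm x ^ k * x a ^ 2 ∂μ = ∫ x, TT hm x ^ k * x ⟨0, by omega⟩ ^ 2 ∂μ := by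
  have hne : a ≠ (⟨0, by omega⟩ : Fin m) := by
    rcases ha with h | h | h <;> (rw [h]; exact Fin.ne_of_val_ne (by simp))
  set O := rot a ⟨0, by omega⟩ hne (π/2) with hO
  have hfO : ∀ x, TT hm (O x) ^ k * (O x) ⟨0, by omega⟩ ^ 2 = TT hm x ^ k * x a ^ 2 := by
    intro x
    have h0 : (O x) ⟨0, by omega⟩ = x a := by
      rw [hO, rot_apply, rotFun_apply_j _ _ hne]
      simp
    have hT : TT hm (O x) = TT hm x := by
      have ha' : (O x) a = -(x ⟨0, by omega⟩) := by
        rw [hO, rot_apply, rotFun_apply_i]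
        simp
      unfold TT
      rcases ha with h | h | h <;> subst h <;>
        (rw [h0, ha', rot_apply, rot_apply,
          rotFun_apply_ne (Fin.ne_of_val_ne (by simp)) (Fin.ne_of_val_ne (by simp)),
          rotFun_apply_ne (Fin.ne_of_val_ne (by simp)) (Fin.ne_of_val_ne (by simp))]
         ring)
    rw [hT, h0]
  calc ∫ x, TT hm x ^ k * x a ^ 2 ∂μ = ∫ x, TT hm (O x) ^ k * (O x) ⟨0, by omega⟩ ^ 2 ∂μ := by
        simp_rw [hfO]
    _ = _ := integral_comp_rot μ hinv O (fun y => TT hm y ^ k * y ⟨0, by omega⟩ ^ 2)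
        (((TT_continuous hm).pow k).mul ((EuclideanSpace.proj (⟨0, by omega⟩ : Fin m)).continuous.pow 2))

lemma sym2 (hinv : ∀ O : EuclideanSpace ℝ (Fin m) ≃ₗᵢ[ℝ] EuclideanSpace ℝ (Fin m),
      Measure.map (fun x => O x) μ = μ)
    (hm : 4 ≤ m) (k e : ℕ) (j j' : Fin m) (hj : 4 ≤ j.val) (hj' : 4 ≤ j'.val) :
    ∫ x, TT hm x ^ k * (x ⟨0, by omega⟩ ^ e * x j ^ 2) ∂μ
      = ∫ x, TT hm x ^ k * (x ⟨0, by omega⟩ ^ e * x j' ^ 2) ∂μ := by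
  by_cases hjj : j = j'
  · rw [hjj]
  set O := rot j j' hjj (π/2) with hO
  have hfO : ∀ x, TT hm (O x) ^ k * ((O x) ⟨0, by omega⟩ ^ e * (O x) j' ^ 2)
      = TT hm x ^ k * (x ⟨0, by omega⟩ ^ e * x j ^ 2) := by
    intro x
    have h0 : (O x) ⟨0, by omega⟩ = x ⟨0, by omega⟩ := by
      rw [hO, rot_apply, rotFun_apply_ne (Fin.ne_of_val_ne (by simp; omega))
        (Fin.ne_of_val_ne (by simp; omega))]
    have hj'x : (O x) j' = x j := by
      rw [hO, rot_apply, rotFun_apply_j _ _ hjj]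
      simp
    rw [h0, hj'x, TT_rot_outside hm j j' hjj hj hj']
  calc ∫ x, TT hm x ^ k * (x ⟨0, by omega⟩ ^ e * x j ^ 2) ∂μ
      = ∫ x, TT hm (O x) ^ k * ((O x) ⟨0, by omega⟩ ^ e * (O x) j' ^ 2) ∂μ := by
        simp_rw [hfO]
    _ = _ := integral_comp_rot μ hinv O (fun y => TT hm y ^ k * (y ⟨0, by omega⟩ ^ e * y j' ^ 2))
        (((TT_continuous hm).pow k).mul
          (((EuclideanSpace.proj (⟨0, by omega⟩ : Fin m)).continuous.pow e).mul
            ((EuclideanSpace.proj j').continuous.pow 2)))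


lemma rel (hinv : ∀ O : EuclideanSpace ℝ (Fin m) ≃ₗᵢ[ℝ] EuclideanSpace ℝ (Fin m),
      Measure.map (fun x => O x) μ = μ)
    (hsphere : μ (Metric.sphere (0 : EuclideanSpace ℝ (Fin m)) 1) = 1)
    (hm : 4 ≤ m) (k : ℕ) (j : Fin m) (hj : 4 ≤ j.val) :
    ∫ x, TT hm x ^ k * x ⟨0, by omega⟩ ^ 2 ∂μ
      = ∫ x, TT hm x ^ k * x j ^ 2 ∂μ
        + (2 * k : ℝ) * ∫ x, TT hm x ^ (k - 1) * (x ⟨0, by omega⟩ ^ 2 * x j ^ 2) ∂μ := by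
  set i0 : Fin m := ⟨0, by omega⟩ with hi0
  have hne : i0 ≠ j := Fin.ne_of_val_ne (by simp [hi0]; omega)
  set A : EuclideanSpace ℝ (Fin m) → ℝ :=
    fun x => x ⟨1, by omega⟩ ^ 2 + x ⟨2, by omega⟩ ^ 2 + x ⟨3, by omega⟩ ^ 2 with hA
  set u : ℝ → EuclideanSpace ℝ (Fin m) → ℝ :=
    fun θ x => Real.cos θ * x i0 - Real.sin θ * x j with hu
  set v : ℝ → EuclideanSpace ℝ (Fin m) → ℝ :=
    fun θ x => Real.sin θ * x i0 + Real.cos θ * x j with hv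
  set F : ℝ → EuclideanSpace ℝ (Fin m) → ℝ :=
    fun θ x => (A x + u θ x ^ 2) ^ k * (u θ x * v θ x) with hF
  set F' : ℝ → EuclideanSpace ℝ (Fin m) → ℝ :=
    fun θ x => ((k : ℝ) * (A x + u θ x ^ 2) ^ (k - 1) * ((2:ℕ) * u θ x ^ (2-1) * (-(v θ x))))
        * (u θ x * v θ x)
      + (A x + u θ x ^ 2) ^ k * (-(v θ x) * v θ x + u θ x * u θ x) with hF'
  have hucont : ∀ θ, Continuous (u θ) := by
    intro θ
    exact (continuous_const.mul (EuclideanSpace.proj i0).continuous).sub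
      (continuous_const.mul (EuclideanSpace.proj j).continuous)
  have hvcont : ∀ θ, Continuous (v θ) := by
    intro θ
    exact (continuous_const.mul (EuclideanSpace.proj i0).continuous).add
      (continuous_const.mul (EuclideanSpace.proj j).continuous)
  have hAcont : Continuous A := by
    rw [hA]
    exact (((EuclideanSpace.proj (⟨1, by omega⟩ : Fin m)).continuous.pow 2).add
      ((EuclideanSpace.proj (⟨2, by omega⟩ : Fin m)).continuous.pow 2)).add
      ((EuclideanSpace.proj (⟨3, by omega⟩ : Fin m)).continuous.pow 2)
  have hFcont : ∀ θ, Continuous (F θ) := fun θ =>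
    ((hAcont.add ((hucont θ).pow 2)).pow k).mul ((hucont θ).mul (hvcont θ))
  -- joint continuity of F'
  have hujoint : Continuous (fun p : ℝ × EuclideanSpace ℝ (Fin m) => u p.1 p.2) := by
    apply Continuous.sub
    · exact (Real.continuous_cos.comp continuous_fst).mul
        ((EuclideanSpace.proj i0).continuous.comp continuous_snd)
    · exact (Real.continuous_sin.comp continuous_fst).mul
        ((EuclideanSpace.proj j).continuous.comp continuous_snd)
  have hvjoint : Continuous (fun p : ℝ × EuclideanSpace ℝ (Fin m) => v p.1 p.2) := by
    apply Continuous.add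
    · exact (Real.continuous_sin.comp continuous_fst).mul
        ((EuclideanSpace.proj i0).continuous.comp continuous_snd)
    · exact (Real.continuous_cos.comp continuous_fst).mul
        ((EuclideanSpace.proj j).continuous.comp continuous_snd)
  have hF'joint : Continuous (fun p : ℝ × EuclideanSpace ℝ (Fin m) => F' p.1 p.2) := by
    rw [hF']
    have hbase : Continuous (fun p : ℝ × EuclideanSpace ℝ (Fin m) =>
        A p.2 + u p.1 p.2 ^ 2) := (hAcont.comp continuous_snd).add (hujoint.pow 2)
    exact (((continuous_const.mul (hbase.pow (k-1))).mul
        ((continuous_const.mul (hujoint.pow (2-1))).mul hvjoint.neg)).mul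
        (hujoint.mul hvjoint)).add
      ((hbase.pow k).mul ((hvjoint.neg.mul hvjoint).add (hujoint.mul hujoint)))
  -- constancy of the parametrized integral
  have hFint : ∀ θ, ∫ x, F θ x ∂μ = ∫ x, F 0 x ∂μ := by
    intro θ
    have hu0 : ∀ y, u 0 y = y i0 := by intro y; rw [hu]; simp
    have hv0 : ∀ y, v 0 y = y j := by intro y; rw [hv]; simp
    have hcomp : ∀ x, F 0 (rot i0 j hne θ x) = F θ x := by
      intro x
      have h0 : rot i0 j hne θ x i0 = u θ x := by rw [rot_apply, rotFun_apply_i]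
      have hjx : rot i0 j hne θ x j = v θ x := by rw [rot_apply, rotFun_apply_j _ _ hne]
      have hAx : A (rot i0 j hne θ x) = A x := by
        rw [hA]
        simp only
        rw [rot_apply, rot_apply, rot_apply,
          rotFun_apply_ne (Fin.ne_of_val_ne (by simp [hi0])) (Fin.ne_of_val_ne (by simp; omega)),
          rotFun_apply_ne (Fin.ne_of_val_ne (by simp [hi0])) (Fin.ne_of_val_ne (by simp; omega)),
          rotFun_apply_ne (Fin.ne_of_val_ne (by simp [hi0])) (Fin.ne_of_val_ne (by simp; omega))]
      show (A _ + u 0 (rot i0 j hne θ x) ^ 2) ^ k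
          * (u 0 (rot i0 j hne θ x) * v 0 (rot i0 j hne θ x))
        = (A x + u θ x ^ 2) ^ k * (u θ x * v θ x)
      rw [hu0, hv0, h0, hjx, hAx]
    calc ∫ x, F θ x ∂μ = ∫ x, F 0 (rot i0 j hne θ x) ∂μ := by simp_rw [hcomp]
      _ = ∫ x, F 0 x ∂μ := integral_comp_rot μ hinv _ _ (hFcont 0)
  -- derivative of the parametrized integral at 0
  have hderiv : ∀ (θ : ℝ) (x : EuclideanSpace ℝ (Fin m)),
      HasDerivAt (fun t => F t x) (F' θ x) θ := by
    intro θ x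
    have hud : HasDerivAt (fun t => u t x) (-(v θ x)) θ := by
      have h1 := (Real.hasDerivAt_cos θ).mul_const (x i0)
      have h2 := (Real.hasDerivAt_sin θ).mul_const (x j)
      have h3 := h1.sub h2
      rw [show -(v θ x) = -Real.sin θ * x i0 - Real.cos θ * x j by rw [hv]; ring]; exact h3
    have hvd : HasDerivAt (fun t => v t x) (u θ x) θ := by
      have h1 := (Real.hasDerivAt_sin θ).mul_const (x i0)
      have h2 := (Real.hasDerivAt_cos θ).mul_const (x j)
      have h3 := h1.add h2
      rw [show u θ x = Real.cos θ * x i0 + -Real.sin θ * x j by rw [hu]; ring]; exact h3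
    have hbase : HasDerivAt (fun t => A x + u t x ^ 2)
        ((2:ℕ) * u θ x ^ (2-1) * (-(v θ x))) θ := (hud.pow 2).const_add (A x)
    have hP : HasDerivAt (fun t => (A x + u t x ^ 2) ^ k)
        ((k : ℝ) * (A x + u θ x ^ 2) ^ (k - 1) * ((2:ℕ) * u θ x ^ (2-1) * (-(v θ x)))) θ :=
      hbase.pow k
    exact hP.mul (hud.mul hvd)
  -- bound
  obtain ⟨C, hC⟩ := ((isCompact_Icc (a := (-1:ℝ)) (b := 1)).prod
      (isCompact_sphere (0 : EuclideanSpace ℝ (Fin m)) 1)).exists_bound_of_continuousOn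
      hF'joint.continuousOn
  have key := hasDerivAt_integral_of_dominated_loc_of_deriv_le (μ := μ) (F := F) (F' := F')
    (x₀ := (0:ℝ)) (bound := fun _ => C) (Metric.ball_mem_nhds (0:ℝ) one_pos)
    (Filter.Eventually.of_forall fun θ => (hFcont θ).aestronglyMeasurable)
    (cont_integrable μ hsphere _ (hFcont 0))
    (hF'joint.comp (Continuous.prodMk_right (0:ℝ))).aestronglyMeasurable
    (by
      filter_upwards [ae_sphere μ hsphere] with x hx θ hθ
      exact hC (θ, x) ⟨Set.mem_Icc.mpr (by
          have := Metric.mem_ball.mp hθ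
          rw [Real.dist_eq, sub_zero] at this
          constructor <;> [linarith [abs_le.mp this.le]; linarith [abs_le.mp this.le]]),
        by simpa [Metric.mem_sphere, dist_zero_right] using hx⟩)
    (integrable_const C)
    (Filter.Eventually.of_forall fun x θ _ => hderiv θ x)
  have hconst : (fun θ => ∫ x, F θ x ∂μ) = fun _ => ∫ x, F 0 x ∂μ := funext hFint
  have hzero : ∫ x, F' 0 x ∂μ = 0 := by
    have hd0 : HasDerivAt (fun θ => ∫ x, F θ x ∂μ) 0 0 := by
      rw [hconst]; exact hasDerivAt_const 0 _
    exact key.2.unique hd0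
  -- identify F' 0 and split the integral
  have hF'0 : ∀ x, F' 0 x = TT hm x ^ k * x i0 ^ 2 - TT hm x ^ k * x j ^ 2
      - (2 * k : ℝ) * (TT hm x ^ (k - 1) * (x i0 ^ 2 * x j ^ 2)) := by
    intro x
    rw [hF', hu, hv, hA]
    simp only [Real.cos_zero, Real.sin_zero, one_mul, zero_mul, sub_zero, add_zero, zero_add]
    have hTx : x ⟨1, by omega⟩ ^ 2 + x ⟨2, by omega⟩ ^ 2 + x ⟨3, by omega⟩ ^ 2 + x i0 ^ 2
        = TT hm x := by unfold TT; rw [hi0]; ring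
    rw [show (x ⟨1, by omega⟩ ^ 2 + x ⟨2, by omega⟩ ^ 2 + x ⟨3, by omega⟩ ^ 2 + x i0 ^ 2)
      = TT hm x from hTx]
    push_cast
    ring
  have I1 : Integrable (fun x => TT hm x ^ k * x i0 ^ 2) μ :=
    cont_integrable μ hsphere _ (((TT_continuous hm).pow k).mul
      ((EuclideanSpace.proj i0).continuous.pow 2))
  have I2 : Integrable (fun x => TT hm x ^ k * x j ^ 2) μ :=
    cont_integrable μ hsphere _ (((TT_continuous hm).pow k).mul
      ((EuclideanSpace.proj j).continuous.pow 2))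
  have I3 : Integrable (fun x => TT hm x ^ (k - 1) * (x i0 ^ 2 * x j ^ 2)) μ :=
    cont_integrable μ hsphere _ (((TT_continuous hm).pow (k-1)).mul
      (((EuclideanSpace.proj i0).continuous.pow 2).mul
        ((EuclideanSpace.proj j).continuous.pow 2)))
  rw [show (fun x => F' 0 x) = fun x => TT hm x ^ k * x i0 ^ 2 - TT hm x ^ k * x j ^ 2
      - (2 * k : ℝ) * (TT hm x ^ (k - 1) * (x i0 ^ 2 * x j ^ 2)) from funext hF'0] at hzero
  have I12 : Integrable (fun x => TT hm x ^ k * x i0 ^ 2 - TT hm x ^ k * x j ^ 2) μ := I1.sub I2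
  rw [integral_sub I12 (I3.const_mul _), integral_sub I1 I2, integral_const_mul] at hzero
  linarith [hzero]


lemma S_facts (hm : 4 ≤ m) :
    ((Finset.univ.filter (fun l : Fin m => ¬ l.val < 4)).card = m - 4)
    ∧ ∀ x : EuclideanSpace ℝ (Fin m),
      ∑ l ∈ Finset.univ.filter (fun l : Fin m => l.val < 4), x l ^ 2 = TT hm x := by
  have hF4 : Finset.univ.filter (fun l : Fin m => l.val < 4)
      = {(⟨0, by omega⟩ : Fin m), ⟨1, by omega⟩, ⟨2, by omega⟩, ⟨3, by omega⟩} := by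
    ext l
    simp only [Finset.mem_filter, Finset.mem_univ, true_and, Finset.mem_insert,
      Finset.mem_singleton, Fin.ext_iff]
    omega
  constructor
  · have h1 : (Finset.univ.filter (fun l : Fin m => l.val < 4)).card
        + (Finset.univ.filter (fun l : Fin m => ¬ l.val < 4)).card
        = (Finset.univ : Finset (Fin m)).card :=
      Finset.card_filter_add_card_filter_not _
    have h2 : (Finset.univ.filter (fun l : Fin m => l.val < 4)).card = 4 := by
      rw [hF4]
      rw [Finset.card_insert_of_notMem (by simp [Fin.ext_iff]),
        Finset.card_insert_of_notMem (by simp [Fin.ext_iff]),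
        Finset.card_insert_of_notMem (by simp [Fin.ext_iff]), Finset.card_singleton]
    have h3 : (Finset.univ : Finset (Fin m)).card = m := by simp
    omega
  · intro x
    rw [hF4, Finset.sum_insert (by simp [Fin.ext_iff]), Finset.sum_insert (by simp [Fin.ext_iff]),
      Finset.sum_insert (by simp [Fin.ext_iff]), Finset.sum_singleton]
    unfold TT
    ring

lemma sum_S (hsphere : μ (Metric.sphere (0 : EuclideanSpace ℝ (Fin m)) 1) = 1)
    (hm : 4 ≤ m) (k e : ℕ) :
    ∑ j ∈ Finset.univ.filter (fun l : Fin m => ¬ l.val < 4),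
        ∫ x, TT hm x ^ k * (x ⟨0, by omega⟩ ^ e * x j ^ 2) ∂μ
      = ∫ x, TT hm x ^ k * x ⟨0, by omega⟩ ^ e ∂μ
        - ∫ x, TT hm x ^ (k+1) * x ⟨0, by omega⟩ ^ e ∂μ := by
  have hint : ∀ j : Fin m,
      Integrable (fun x => TT hm x ^ k * (x ⟨0, by omega⟩ ^ e * x j ^ 2)) μ := fun j =>
    cont_integrable μ hsphere _ (((TT_continuous hm).pow k).mul
      (((EuclideanSpace.proj (⟨0, by omega⟩ : Fin m)).continuous.pow e).mul
        ((EuclideanSpace.proj j).continuous.pow 2)))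
  rw [← integral_finset_sum _ (fun j _ => hint j)]
  have hae : ∀ᵐ x ∂μ, ∑ j ∈ Finset.univ.filter (fun l : Fin m => ¬ l.val < 4),
        TT hm x ^ k * (x ⟨0, by omega⟩ ^ e * x j ^ 2)
      = TT hm x ^ k * x ⟨0, by omega⟩ ^ e - TT hm x ^ (k+1) * x ⟨0, by omega⟩ ^ e := by
    filter_upwards [ae_sum_sq μ hsphere] with x hx
    have hsq : ∑ j ∈ Finset.univ.filter (fun l : Fin m => ¬ l.val < 4), x j ^ 2
        = 1 - TT hm x := by
      have h0 := Finset.sum_filter_add_sum_filter_not Finset.univ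
        (fun l : Fin m => l.val < 4) (fun l => x l ^ 2)
      rw [(S_facts hm).2 x, hx] at h0
      linarith
    calc ∑ j ∈ Finset.univ.filter (fun l : Fin m => ¬ l.val < 4),
          TT hm x ^ k * (x ⟨0, by omega⟩ ^ e * x j ^ 2)
        = ∑ j ∈ Finset.univ.filter (fun l : Fin m => ¬ l.val < 4),
            (TT hm x ^ k * x ⟨0, by omega⟩ ^ e) * x j ^ 2 :=
          Finset.sum_congr rfl (fun j _ => by ring)
      _ = (TT hm x ^ k * x ⟨0, by omega⟩ ^ e) * (1 - TT hm x) := by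
          rw [← Finset.mul_sum, hsq]
      _ = _ := by ring
  rw [integral_congr_ae hae]
  exact integral_sub
    (cont_integrable μ hsphere _ (((TT_continuous hm).pow k).mul
      ((EuclideanSpace.proj (⟨0, by omega⟩ : Fin m)).continuous.pow e)))
    (cont_integrable μ hsphere _ (((TT_continuous hm).pow (k+1)).mul
      ((EuclideanSpace.proj (⟨0, by omega⟩ : Fin m)).continuous.pow e)))

lemma four_b (hinv : ∀ O : EuclideanSpace ℝ (Fin m) ≃ₗᵢ[ℝ] EuclideanSpace ℝ (Fin m),
      Measure.map (fun x => O x) μ = μ)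
    (hsphere : μ (Metric.sphere (0 : EuclideanSpace ℝ (Fin m)) 1) = 1)
    (hm : 4 ≤ m) (t : ℕ) :
    ∫ x, TT hm x ^ (t+1) ∂μ = 4 * ∫ x, TT hm x ^ t * x ⟨0, by omega⟩ ^ 2 ∂μ := by
  have hInt : ∀ a : Fin m, Integrable (fun x => TT hm x ^ t * x a ^ 2) μ := fun a =>
    cont_integrable μ hsphere _ (((TT_continuous hm).pow t).mul
      ((EuclideanSpace.proj a).continuous.pow 2))
  have h1 : (fun x : EuclideanSpace ℝ (Fin m) => TT hm x ^ (t+1))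
      = fun x => ((TT hm x ^ t * x ⟨0, by omega⟩ ^ 2 + TT hm x ^ t * x ⟨1, by omega⟩ ^ 2)
          + TT hm x ^ t * x ⟨2, by omega⟩ ^ 2) + TT hm x ^ t * x ⟨3, by omega⟩ ^ 2 := by
    funext x
    rw [pow_succ]
    unfold TT
    ring
  have Iab : Integrable (fun x => TT hm x ^ t * x ⟨0, by omega⟩ ^ 2
      + TT hm x ^ t * x ⟨1, by omega⟩ ^ 2) μ := (hInt _).add (hInt _)
  have Iabc : Integrable (fun x => (TT hm x ^ t * x ⟨0, by omega⟩ ^ 2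
      + TT hm x ^ t * x ⟨1, by omega⟩ ^ 2) + TT hm x ^ t * x ⟨2, by omega⟩ ^ 2) μ :=
    Iab.add (hInt _)
  rw [h1, integral_add Iabc (hInt _), integral_add Iab (hInt _),
    integral_add (hInt _) (hInt _)]
  rw [sym1 μ hinv hm t ⟨1, by omega⟩ (Or.inl rfl),
    sym1 μ hinv hm t ⟨2, by omega⟩ (Or.inr (Or.inl rfl)),
    sym1 μ hinv hm t ⟨3, by omega⟩ (Or.inr (Or.inr rfl))]
  ring

lemma recursion (hinv : ∀ O : EuclideanSpace ℝ (Fin m) ≃ₗᵢ[ℝ] EuclideanSpace ℝ (Fin m),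
      Measure.map (fun x => O x) μ = μ)
    (hsphere : μ (Metric.sphere (0 : EuclideanSpace ℝ (Fin m)) 1) = 1)
    (hm : 4 ≤ m) (k : ℕ) :
    (2 * (k:ℝ) + m) * ∫ x, TT hm x ^ (k+1) ∂μ = (2 * k + 4) * ∫ x, TT hm x ^ k ∂μ := by
  have he0 : ∀ (t : ℕ) (j : Fin m), (∫ x, TT hm x ^ t * (x ⟨0, by omega⟩ ^ (0:ℕ) * x j ^ 2) ∂μ)
      = ∫ x, TT hm x ^ t * x j ^ 2 ∂μ := by
    intro t j
    simp only [pow_zero, one_mul]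
  have he0' : ∀ (t : ℕ), (∫ x, TT hm x ^ t * x ⟨0, by omega⟩ ^ (0:ℕ) ∂μ)
      = ∫ x, TT hm x ^ t ∂μ := by
    intro t
    simp only [pow_zero, mul_one]
  rcases Nat.lt_or_ge 4 m with hlt | hge
  case inr =>
    have hm4 : m = 4 := le_antisymm hge hm
    subst hm4
    have hS : Finset.univ.filter (fun l : Fin 4 => ¬ l.val < 4) = ∅ := by
      ext l
      simp only [Finset.mem_filter, Finset.mem_univ, true_and, Finset.notMem_empty, iff_false,
        not_not]
      omega
    have h := sum_S μ hsphere hm k 0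
    rw [hS, Finset.sum_empty, he0', he0'] at h
    have h2 : ∫ x, TT hm x ^ (k+1) ∂μ = ∫ x, TT hm x ^ k ∂μ := by linarith
    rw [h2]
    norm_num
  case inl =>
    set j0 : Fin m := ⟨4, hlt⟩ with hj0
    set Nk := ∫ x, TT hm x ^ k ∂μ with hNk
    set Nk1 := ∫ x, TT hm x ^ (k+1) ∂μ with hNk1
    set b := ∫ x, TT hm x ^ k * x ⟨0, by omega⟩ ^ 2 ∂μ with hbdef
    set c := ∫ x, TT hm x ^ k * x j0 ^ 2 ∂μ with hcdef
    set d := ∫ x, TT hm x ^ (k-1) * (x ⟨0, by omega⟩ ^ 2 * x j0 ^ 2) ∂μ with hddef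
    have H1 : Nk1 = 4 * b := four_b μ hinv hsphere hm k
    have H3 : b = c + (2 * (k:ℝ)) * d := rel μ hinv hsphere hm k j0 (by simp [hj0])
    have hcard := (S_facts (m := m) hm).1
    have hsum0 : ∀ (t e : ℕ),
        (∀ j : Fin m, 4 ≤ j.val →
          (∫ x, TT hm x ^ t * (x ⟨0, by omega⟩ ^ e * x j ^ 2) ∂μ)
            = ∫ x, TT hm x ^ t * (x ⟨0, by omega⟩ ^ e * x j0 ^ 2) ∂μ) →
        ((m : ℝ) - 4) * (∫ x, TT hm x ^ t * (x ⟨0, by omega⟩ ^ e * x j0 ^ 2) ∂μ)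
          = ∫ x, TT hm x ^ t * x ⟨0, by omega⟩ ^ e ∂μ
            - ∫ x, TT hm x ^ (t+1) * x ⟨0, by omega⟩ ^ e ∂μ := by
      intro t e hct
      have h := sum_S μ hsphere hm t e
      rw [Finset.sum_congr rfl (fun j hj => hct j (by
        have := (Finset.mem_filter.mp hj).2
        omega))] at h
      rw [Finset.sum_const, nsmul_eq_mul, hcard] at h
      rw [← h]
      congr 1
      rw [Nat.cast_sub hm]
      norm_num
    have H2 : ((m : ℝ) - 4) * c = Nk - Nk1 := by
      have hct : ∀ j : Fin m, 4 ≤ j.val →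
          (∫ x, TT hm x ^ k * (x ⟨0, by omega⟩ ^ (0:ℕ) * x j ^ 2) ∂μ)
            = ∫ x, TT hm x ^ k * (x ⟨0, by omega⟩ ^ (0:ℕ) * x j0 ^ 2) ∂μ := fun j hj =>
        sym2 μ hinv hm k 0 j j0 hj (by simp [hj0])
      have h := hsum0 k 0 hct
      rw [he0', he0', he0 k j0] at h
      exact h
    have H4 : (2 * (k:ℝ)) * (((m : ℝ) - 4) * d) = (2 * (k:ℝ)) * ((Nk - Nk1)/4) := by
      cases k with
      | zero => norm_num
      | succ t =>
        have hct : ∀ j : Fin m, 4 ≤ j.val →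
            (∫ x, TT hm x ^ t * (x ⟨0, by omega⟩ ^ (2:ℕ) * x j ^ 2) ∂μ)
              = ∫ x, TT hm x ^ t * (x ⟨0, by omega⟩ ^ (2:ℕ) * x j0 ^ 2) ∂μ := fun j hj =>
          sym2 μ hinv hm t 2 j j0 hj (by simp [hj0])
        have h := hsum0 t 2 hct
        have hfa := four_b μ hinv hsphere hm t
        have hd : d = ∫ x, TT hm x ^ t * (x ⟨0, by omega⟩ ^ 2 * x j0 ^ 2) ∂μ := by
          rw [hddef]
          norm_num
        rw [hd, h]
        push_cast
        rw [hNk]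
        linear_combination ((t:ℝ)+1)/2 * H1 - ((t:ℝ)+1)/2 * hfa
    linear_combination ((m:ℝ)-4) * H1 + 4 * H2 + (4*((m:ℝ)-4)) * H3 + 4 * H4

end


/-- The `p`-th moment of the first edgelength of a random spatial arm of total length 2:
`E(|e₁|^p, Arm₃(n)) = 2^p · B(p,2n)/B(p,2)`.  Here `μ` is the uniform (rotation-invariant)
probability measure on the unit sphere in `ℝ^{4n}`, and the first edgelength of the arm
determined by `√2·x` is `2(x₀² + x₁² + x₂² + x₃²)`. -/
theorem edgelength_moment_space_arm (n p : ℕ) (hn : 1 ≤ n) (hp : 1 ≤ p)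
    (μ : Measure (EuclideanSpace ℝ (Fin (4 * n)))) [IsProbabilityMeasure μ]
    (hsphere : μ (Metric.sphere (0 : EuclideanSpace ℝ (Fin (4 * n))) 1) = 1)
    (hinv : ∀ O : EuclideanSpace ℝ (Fin (4 * n)) ≃ₗᵢ[ℝ] EuclideanSpace ℝ (Fin (4 * n)),
      Measure.map (fun x => O x) μ = μ) :
    ∫ x, (2 * ((x ⟨0, by omega⟩) ^ 2 + (x ⟨1, by omega⟩) ^ 2
          + (x ⟨2, by omega⟩) ^ 2 + (x ⟨3, by omega⟩) ^ 2)) ^ p ∂μ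
      = 2 ^ p * eulerBeta p (2 * n) / eulerBeta p 2 := by
  obtain ⟨q, rfl⟩ : ∃ q, p = q + 1 := ⟨p - 1, by omega⟩
  obtain ⟨w, rfl⟩ : ∃ w, n = w + 1 := ⟨n - 1, by omega⟩
  have hm : 4 ≤ 4 * (w + 1) := by omega
  have key : ∀ k : ℕ, (∫ x, TT hm x ^ k ∂μ) * ((k + 2*w + 1).factorial : ℝ)
      = ((k+1).factorial : ℝ) * ((2*w+1).factorial : ℝ) := by
    intro k
    induction k with
    | zero =>
      have h0 : ∫ x, TT hm x ^ 0 ∂μ = 1 := by simp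
      rw [h0]
      norm_num
    | succ t ih =>
      have hrec := recursion μ hinv hsphere hm t
      have hfs1 : (t + 1 + 2*w + 1) = (t + 2*w + 1) + 1 := by omega
      rw [hfs1, Nat.factorial_succ]
      have hfs2 : (t + 1 + 1).factorial = (t+2) * (t+1).factorial := by
        rw [show t+1+1 = (t+1)+1 from rfl, Nat.factorial_succ]
      rw [hfs2]
      push_cast at hrec ⊢
      linear_combination (((t + 2*w + 1).factorial : ℝ))/2 * hrec + ((t:ℝ)+2) * ih
  -- rewrite the left-hand side
  have hfun : (fun x : EuclideanSpace ℝ (Fin (4 * (w+1))) => (2 * ((x ⟨0, by omega⟩) ^ 2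
        + (x ⟨1, by omega⟩) ^ 2 + (x ⟨2, by omega⟩) ^ 2 + (x ⟨3, by omega⟩) ^ 2)) ^ (q+1))
      = fun x => 2 ^ (q+1) * TT hm x ^ (q+1) := by
    funext x
    unfold TT
    rw [mul_pow]
  rw [hfun, integral_const_mul]
  -- compute the Gamma values
  have hGp : Real.Gamma ((q+1 : ℕ) : ℝ) = (q.factorial : ℝ) := by
    rw [show ((q+1 : ℕ) : ℝ) = (q : ℝ) + 1 by push_cast; ring, Real.Gamma_nat_eq_factorial]
  have hG2n : Real.Gamma (2 * ((w+1 : ℕ) : ℝ)) = (((2*w+1).factorial : ℕ) : ℝ) := by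
    rw [show (2 * ((w+1 : ℕ) : ℝ)) = ((2*w+1 : ℕ) : ℝ) + 1 by push_cast; ring,
      Real.Gamma_nat_eq_factorial]
  have hGpn : Real.Gamma (((q+1 : ℕ) : ℝ) + 2 * ((w+1 : ℕ) : ℝ)) = (((q+2*w+2).factorial : ℕ) : ℝ) := by
    rw [show (((q+1 : ℕ) : ℝ) + 2 * ((w+1 : ℕ) : ℝ)) = ((q+2*w+2 : ℕ) : ℝ) + 1 by push_cast; ring,
      Real.Gamma_nat_eq_factorial]
  have hGp2 : Real.Gamma (((q+1 : ℕ) : ℝ) + 2) = (((q+2).factorial : ℕ) : ℝ) := by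
    rw [show (((q+1 : ℕ) : ℝ) + 2) = ((q+2 : ℕ) : ℝ) + 1 by push_cast; ring,
      Real.Gamma_nat_eq_factorial]
  rw [eulerBeta, eulerBeta, hGp, hG2n, hGpn, hGp2, Real.Gamma_two]
  have hN := key (q+1)
  rw [show q+1+2*w+1 = q+2*w+2 from by omega] at hN
  have hq2 : ((q+2).factorial : ℝ) ≠ 0 := Nat.cast_ne_zero.mpr (Nat.factorial_ne_zero _)
  have hqf : ((q).factorial : ℝ) ≠ 0 := Nat.cast_ne_zero.mpr (Nat.factorial_ne_zero _)
  have hqw : ((q+2*w+2).factorial : ℝ) ≠ 0 := Nat.cast_ne_zero.mpr (Nat.factorial_ne_zero _)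
  have hw1 : (((2*w+1)).factorial : ℝ) ≠ 0 := Nat.cast_ne_zero.mpr (Nat.factorial_ne_zero _)
  field_simp
  linear_combination hN
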